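/- For every element t ∈ ℂ_p, its orbit under the absolute Galois group, namely the set 𝒞(t) = {σ̂(t) : σ ∈ Gal(ℚ̄_p/ℚ_p)} ⊆ ℂ_p, where σ̂ denotes the continuous isometric extension of σ to ℂ_p, is a compact subset of ℂ_p. -/

import Mathlib

/-!
STATEMENT 4. For every `t ∈ ℂ_p`, the orbit `𝒞(t) = {σ̂(t) : σ ∈ Gal(ℚ̄_p/ℚ_p)}` of `t`
under the absolute Galois group (each `σ` acting via its unique continuous isometric
extension `σ̂` to `ℂ_p`) is a compact subset of `ℂ_p`.

`ℂ_p` is characterised by its defining properties: `Cp` is a complete, algebraically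
closed, ultrametric normed field with an isometric embedding of `ℚ_p` and a dense copy
of an algebraic closure `Qbar` of `ℚ_p`.  The extension `σ̂` of `σ` is encoded as an
isometric ring automorphism `τ` of `Cp` agreeing with `σ` on (the image of) `Qbar`.
-/
theorem galois_orbit_isCompact
    (p : ℕ) [Fact p.Prime]
    (Qbar : Type) [Field Qbar] [Algebra ℚ_[p] Qbar] [IsAlgClosure ℚ_[p] Qbar]
    (Cp : Type) [NormedField Cp] [CompleteSpace Cp] [IsUltrametricDist Cp] [IsAlgClosed Cp]
    [Algebra ℚ_[p] Cp] [Algebra Qbar Cp] [IsScalarTower ℚ_[p] Qbar Cp]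
    (hQp : Isometry (algebraMap ℚ_[p] Cp))
    (hdense : DenseRange (algebraMap Qbar Cp))
    (t : Cp) :
    IsCompact {y : Cp | ∃ σ : Qbar ≃ₐ[ℚ_[p]] Qbar, ∃ τ : Cp ≃+* Cp, Isometry τ ∧
      (∀ a : Qbar, τ (algebraMap Qbar Cp a) = algebraMap Qbar Cp (σ a)) ∧ τ t = y} := by
  classical
  set e : Qbar →+* Cp := algebraMap Qbar Cp with he
  have einj : Function.Injective e := e.injective
  have hroot : ∀ (σ : Qbar ≃ₐ[ℚ_[p]] Qbar) (a : Qbar),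
      σ a ∈ (minpoly ℚ_[p] a).rootSet Qbar := by
    intro σ a
    have hint : IsIntegral ℚ_[p] a :=
      (Algebra.IsAlgebraic.isAlgebraic (R := ℚ_[p]) a).isIntegral
    rw [Polynomial.mem_rootSet]
    refine ⟨minpoly.ne_zero hint, ?_⟩
    rw [← minpoly.algEquiv_eq σ a]
    exact minpoly.aeval _ _
  have hnorm_tau : ∀ (τ : Cp ≃+* Cp), Isometry τ → ∀ x : Cp, ‖τ x‖ = ‖x‖ := by
    intro τ hτ x
    have := hτ.dist_eq x 0
    simpa [dist_eq_norm] using this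
  apply TotallyBounded.isCompact_of_isClosed
  · rw [Metric.totallyBounded_iff]
    intro ε hε
    obtain ⟨a, ha⟩ := hdense.exists_dist_lt t hε
    refine ⟨e '' ((minpoly ℚ_[p] a).rootSet Qbar),
      ((minpoly ℚ_[p] a).rootSet_finite Qbar).image _, ?_⟩
    rintro y ⟨σ, τ, hτ, hcomm, rfl⟩
    refine Set.mem_iUnion₂.2 ⟨e (σ a), Set.mem_image_of_mem _ (hroot σ a), ?_⟩
    rw [Metric.mem_ball]
    have h1 : e (σ a) = τ (e a) := (hcomm a).symm
    rw [h1, hτ.dist_eq]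
    exact ha
  · apply IsSeqClosed.isClosed
    intro y z hy hz
    simp only [Set.mem_setOf_eq] at hy ⊢
    choose σ τ hτ hcomm hval using hy
    letI : MetricSpace Qbar := MetricSpace.induced e einj inferInstance
    have eiso : Isometry ⇑e := Isometry.of_dist_eq fun a b => rfl
    have ui : IsUniformInducing ⇑e := eiso.isUniformInducing
    have dr : DenseRange ⇑e := hdense
    set U : Ultrafilter ℕ := Ultrafilter.of Filter.atTop with hUdef
    have hU : (U : Filter ℕ) ≤ Filter.atTop := Ultrafilter.of_le _
    have key : ∀ a : Qbar, ∃ b : Qbar, {n : ℕ | σ n a = b} ∈ U := by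
      intro a
      have hmem : (minpoly ℚ_[p] a).rootSet Qbar ∈ U.map (fun n => σ n a) := by
        rw [Ultrafilter.mem_map]
        exact Filter.univ_mem' fun n => hroot (σ n) a
      obtain ⟨b, -, hb⟩ :=
        Ultrafilter.eq_pure_of_finite_mem ((minpoly ℚ_[p] a).rootSet_finite Qbar) hmem
      refine ⟨b, ?_⟩
      have hmem2 : {b} ∈ U.map (fun n => σ n a) := by
        rw [hb]; exact Filter.mem_pure.2 rfl
      rw [Ultrafilter.mem_map] at hmem2
      have hpre : (fun n => σ n a) ⁻¹' {b} = {n : ℕ | σ n a = b} := by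
        ext n; simp
      rwa [hpre] at hmem2
    choose sf hsf using key
    have pick : ∀ L : List Qbar, ∃ n : ℕ, ∀ a ∈ L, σ n a = sf a := by
      intro L
      have hL : {n : ℕ | ∀ a ∈ L, σ n a = sf a} ∈ U := by
        induction L with
        | nil => exact Filter.mem_of_superset Filter.univ_mem fun n _ => by simp
        | cons a L ih =>
          refine Filter.mem_of_superset (Filter.inter_mem (hsf a) ih) ?_
          rintro n ⟨h1, h2⟩ b hb
          rcases List.mem_cons.mp hb with rfl | hb
          · exact h1
          · exact h2 b hb
      exact Filter.nonempty_of_mem hL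
    let S0 : Qbar →ₐ[ℚ_[p]] Qbar :=
      { toFun := sf
        map_one' := by
          obtain ⟨n, hn⟩ := pick [1]
          show sf 1 = 1
          rw [← hn 1 (by simp), map_one]
        map_mul' := fun a b => by
          obtain ⟨n, hn⟩ := pick [a, b, a * b]
          show sf (a * b) = sf a * sf b
          rw [← hn a (by simp), ← hn b (by simp), ← hn (a * b) (by simp), map_mul]
        map_zero' := by
          obtain ⟨n, hn⟩ := pick [0]
          show sf 0 = 0
          rw [← hn 0 (by simp), map_zero]
        map_add' := fun a b => by
          obtain ⟨n, hn⟩ := pick [a, b, a + b]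
          show sf (a + b) = sf a + sf b
          rw [← hn a (by simp), ← hn b (by simp), ← hn (a + b) (by simp), map_add]
        commutes' := fun c => by
          obtain ⟨n, hn⟩ := pick [algebraMap ℚ_[p] Qbar c]
          show sf (algebraMap ℚ_[p] Qbar c) = algebraMap ℚ_[p] Qbar c
          rw [← hn _ (by simp), AlgEquiv.commutes] }
    have hbij : Function.Bijective S0 := Algebra.IsAlgebraic.algHom_bijective S0
    let σ' : Qbar ≃ₐ[ℚ_[p]] Qbar := AlgEquiv.ofBijective S0 hbij
    have hnorm : ∀ a : Qbar, ‖e (sf a)‖ = ‖e a‖ := by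
      intro a
      obtain ⟨n, hn⟩ := pick [a]
      rw [← hn a (by simp), ← hcomm n a]
      exact hnorm_tau (τ n) (hτ n) (e a)
    have hnorm' : ∀ a : Qbar, ‖e (σ'.symm a)‖ = ‖e a‖ := by
      intro a
      have h2 : sf (σ'.symm a) = a := σ'.apply_symm_apply a
      have h3 := hnorm (σ'.symm a)
      rw [h2] at h3
      exact h3.symm
    let fhom : Qbar →+* Cp := e.comp S0.toRingHom
    let ghom : Qbar →+* Cp := e.comp σ'.symm.toAlgHom.toRingHom
    have hfiso : Isometry ⇑fhom := by
      apply Isometry.of_dist_eq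
      intro a b
      show dist (e (S0 a)) (e (S0 b)) = dist (e a) (e b)
      rw [dist_eq_norm, dist_eq_norm, ← map_sub e, ← map_sub e, ← map_sub S0]
      exact hnorm (a - b)
    have hgiso : Isometry ⇑ghom := by
      apply Isometry.of_dist_eq
      intro a b
      show dist (e (σ'.symm a)) (e (σ'.symm b)) = dist (e a) (e b)
      rw [dist_eq_norm, dist_eq_norm, ← map_sub e, ← map_sub e, ← map_sub σ'.symm]
      exact hnorm' (a - b)
    let ψ : Cp →+* Cp := IsDenseInducing.extendRingHom ui dr hfiso.uniformContinuous
    let φ : Cp →+* Cp := IsDenseInducing.extendRingHom ui dr hgiso.uniformContinuous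
    have hψe : ∀ a : Qbar, ψ (e a) = e (S0 a) := fun a =>
      IsDenseInducing.extend_eq (ui.isDenseInducing dr) hfiso.uniformContinuous.continuous a
    have hφe : ∀ a : Qbar, φ (e a) = e (σ'.symm a) := fun a =>
      IsDenseInducing.extend_eq (ui.isDenseInducing dr) hgiso.uniformContinuous.continuous a
    have hψcont : Continuous ⇑ψ :=
      (uniformContinuous_uniformly_extend ui dr hfiso.uniformContinuous).continuous
    have hφcont : Continuous ⇑φ :=
      (uniformContinuous_uniformly_extend ui dr hgiso.uniformContinuous).continuous
    have hfun1 : ⇑φ ∘ ⇑ψ = id := by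
      refine Continuous.ext_on dr (hφcont.comp hψcont) continuous_id ?_
      rintro _ ⟨a, rfl⟩
      simp only [Function.comp_apply, id_eq]
      rw [hψe a, hφe (S0 a)]
      congr 1
      exact σ'.symm_apply_apply a
    have hfun2 : ⇑ψ ∘ ⇑φ = id := by
      refine Continuous.ext_on dr (hψcont.comp hφcont) continuous_id ?_
      rintro _ ⟨a, rfl⟩
      simp only [Function.comp_apply, id_eq]
      rw [hφe a, hψe (σ'.symm a)]
      congr 1
      exact σ'.apply_symm_apply a
    have hcomp1 : φ.comp ψ = RingHom.id Cp := RingHom.ext fun x => congrFun hfun1 x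
    have hcomp2 : ψ.comp φ = RingHom.id Cp := RingHom.ext fun x => congrFun hfun2 x
    let T : Cp ≃+* Cp := RingEquiv.ofRingHom ψ φ hcomp2 hcomp1
    have hψiso : Isometry ⇑ψ := by
      apply Isometry.of_dist_eq
      intro x x'
      have hEq : (fun q : Cp × Cp => dist (ψ q.1) (ψ q.2)) = fun q : Cp × Cp => dist q.1 q.2 := by
        refine Continuous.ext_on (dr.prodMap dr)
          ((hψcont.comp continuous_fst).dist (hψcont.comp continuous_snd))
          (continuous_fst.dist continuous_snd) ?_
        rintro _ ⟨⟨a, b⟩, rfl⟩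
        show dist (ψ (e a)) (ψ (e b)) = dist (e a) (e b)
        rw [hψe a, hψe b]
        exact hfiso.dist_eq a b
      exact congrFun hEq (x, x')
    have hTt : ψ t = z := by
      apply eq_of_forall_dist_le
      intro ε hε
      obtain ⟨a, ha⟩ := hdense.exists_dist_lt t (show (0:ℝ) < ε / 3 by positivity)
      have hev : y ⁻¹' Metric.ball z (ε / 3) ∈ U :=
        hU (hz (Metric.ball_mem_nhds z (by positivity)))
      obtain ⟨n, hn1, hn2⟩ := Filter.nonempty_of_mem (Filter.inter_mem hev (hsf a))
      have hn1' : dist (y n) z < ε / 3 := Metric.mem_ball.mp hn1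
      have e1 : ψ (e a) = τ n (e a) := by
        rw [hψe a]
        show e (sf a) = τ n (e a)
        rw [← hn2, hcomm n a]
      have d1 : dist (ψ t) (ψ (e a)) = dist t (e a) := hψiso.dist_eq _ _
      have d2 : dist (ψ (e a)) (y n) = dist (e a) t := by
        rw [e1, ← hval n]
        exact (hτ n).dist_eq _ _
      have htri := dist_triangle4 (ψ t) (ψ (e a)) (y n) z
      rw [d1, d2] at htri
      have ha' : dist (e a) t < ε / 3 := by rwa [dist_comm]
      have : dist (ψ t) z < ε / 3 + ε / 3 + ε / 3 :=
        lt_of_le_of_lt htri (add_lt_add (add_lt_add ha ha') hn1')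
      linarith
    refine ⟨σ', T, hψiso, fun a => ?_, hTt⟩
    exact hψe a
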